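/- Suppose c^I_t = c^I ≥ 0 and c^B_t = c^B ≥ 0 for all t, with c^I + c^B > 0, and let x̂ be the plan with cumulative levels X̂_t = (c^B·D_t(S⁺) + c^I·D_t(S⁻))/(c^B + c^I). Then S⁻ and S⁺ are worst-case scenarios for x̂: for every scenario S ∈ Γ one has F(x̂, S) ≤ F(x̂, S⁻) = F(x̂, S⁺); equivalently the maximal cost A(x̂) = max_{S ∈ Γ} F(x̂, S) equals F(x̂, S⁻) = F(x̂, S⁺). -/

import Mathlib

/-- Cumulative sum up to period `t`. -/
noncomputable def cum {T : ℕ} (x : Fin T → ℝ) (t : Fin T) : ℝ :=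
  ∑ i ∈ Finset.Iic t, x i

/-- Total cost `F(x, S)` of plan `x` under scenario `S`, with uniform unit costs. -/
noncomputable def totalCostU {T : ℕ} (cI cB : ℝ) (x S : Fin T → ℝ) : ℝ :=
  ∑ t : Fin T, max (cI * (cum x t - cum S t)) (cB * (cum S t - cum x t))

/-- The scenario box `Γ = ∏_t [d⁻_t, d⁺_t]`. -/
def scenarioBox {T : ℕ} (dlo dhi : Fin T → ℝ) : Set (Fin T → ℝ) :=
  Set.univ.pi fun t => Set.Icc (dlo t) (dhi t)

lemma cum_mono {T : ℕ} {u v : Fin T → ℝ} (h : ∀ i, u i ≤ v i) (t : Fin T) :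
    cum u t ≤ cum v t :=
  Finset.sum_le_sum fun i _ => h i

lemma key_le (cI cB a b d : ℝ) (hcI : 0 ≤ cI) (hcB : 0 ≤ cB) (hE : 0 < cB + cI)
    (h1 : a ≤ d) (h2 : d ≤ b) :
    max (cI * ((cB * b + cI * a) / (cB + cI) - d))
      (cB * (d - (cB * b + cI * a) / (cB + cI))) ≤ cI * cB * (b - a) / (cB + cI) := by
  apply max_le
  · rw [div_sub' (ne_of_gt hE), mul_div_assoc', div_le_div_iff₀ hE hE, ← sub_nonneg]
    nlinarith [mul_nonneg (mul_nonneg (mul_nonneg hE.le hE.le) hcI) (sub_nonneg.2 h1)]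
  · rw [sub_div' (ne_of_gt hE), mul_div_assoc', div_le_div_iff₀ hE hE, ← sub_nonneg]
    nlinarith [mul_nonneg (mul_nonneg (mul_nonneg hE.le hE.le) hcB) (sub_nonneg.2 h2)]

lemma key_lo (cI cB a b : ℝ) (hcI : 0 ≤ cI) (hcB : 0 ≤ cB) (hE : 0 < cB + cI)
    (hab : a ≤ b) :
    max (cI * ((cB * b + cI * a) / (cB + cI) - a))
      (cB * (a - (cB * b + cI * a) / (cB + cI))) = cI * cB * (b - a) / (cB + cI) := by
  have h1 : cI * ((cB * b + cI * a) / (cB + cI) - a) = cI * cB * (b - a) / (cB + cI) := by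
    field_simp; ring
  have h2 : cB * (a - (cB * b + cI * a) / (cB + cI)) = -(cB * cB * (b - a) / (cB + cI)) := by
    field_simp; ring
  rw [h1, h2, max_eq_left]
  have hx : 0 ≤ cI * cB * (b - a) / (cB + cI) :=
    div_nonneg (mul_nonneg (mul_nonneg hcI hcB) (sub_nonneg.2 hab)) hE.le
  have hy : 0 ≤ cB * cB * (b - a) / (cB + cI) :=
    div_nonneg (mul_nonneg (mul_nonneg hcB hcB) (sub_nonneg.2 hab)) hE.le
  linarith

lemma key_hi (cI cB a b : ℝ) (hcI : 0 ≤ cI) (hcB : 0 ≤ cB) (hE : 0 < cB + cI)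
    (hab : a ≤ b) :
    max (cI * ((cB * b + cI * a) / (cB + cI) - b))
      (cB * (b - (cB * b + cI * a) / (cB + cI))) = cI * cB * (b - a) / (cB + cI) := by
  have h1 : cI * ((cB * b + cI * a) / (cB + cI) - b) = -(cI * cI * (b - a) / (cB + cI)) := by
    field_simp; ring
  have h2 : cB * (b - (cB * b + cI * a) / (cB + cI)) = cI * cB * (b - a) / (cB + cI) := by
    field_simp; ring
  rw [h1, h2, max_eq_right]
  have hx : 0 ≤ cI * cB * (b - a) / (cB + cI) :=
    div_nonneg (mul_nonneg (mul_nonneg hcI hcB) (sub_nonneg.2 hab)) hE.le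
  have hy : 0 ≤ cI * cI * (b - a) / (cB + cI) :=
    div_nonneg (mul_nonneg (mul_nonneg hcI hcI) (sub_nonneg.2 hab)) hE.le
  linarith

/-- with uniform costs, for the plan `x̂` with cumulative levels
`X̂_t = (c^B·D_t(S⁺) + c^I·D_t(S⁻))/(c^B + c^I)`, the scenarios `S⁻` and `S⁺` are
worst-case scenarios: `F(x̂, S) ≤ F(x̂, S⁻) = F(x̂, S⁺)` for every `S ∈ Γ`. -/
theorem stmt3 {T : ℕ} (cI cB : ℝ) (hcI : 0 ≤ cI) (hcB : 0 ≤ cB) (hc : 0 < cI + cB)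
    (dlo dhi : Fin T → ℝ) (hd0 : ∀ t, 0 ≤ dlo t) (hdd : ∀ t, dlo t ≤ dhi t)
    (xhat : Fin T → ℝ)
    (hxhat : ∀ t, cum xhat t = (cB * cum dhi t + cI * cum dlo t) / (cB + cI)) :
    (∀ S ∈ scenarioBox dlo dhi, totalCostU cI cB xhat S ≤ totalCostU cI cB xhat dlo) ∧
    totalCostU cI cB xhat dlo = totalCostU cI cB xhat dhi := by
  have hE : 0 < cB + cI := by linarith
  have hab : ∀ t, cum dlo t ≤ cum dhi t := fun t => cum_mono hdd t
  have hlo : ∀ t : Fin T,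
      max (cI * (cum xhat t - cum dlo t)) (cB * (cum dlo t - cum xhat t))
        = cI * cB * (cum dhi t - cum dlo t) / (cB + cI) := fun t => by
    rw [hxhat t]; exact key_lo cI cB _ _ hcI hcB hE (hab t)
  have hhi : ∀ t : Fin T,
      max (cI * (cum xhat t - cum dhi t)) (cB * (cum dhi t - cum xhat t))
        = cI * cB * (cum dhi t - cum dlo t) / (cB + cI) := fun t => by
    rw [hxhat t]; exact key_hi cI cB _ _ hcI hcB hE (hab t)
  constructor
  · intro S hS
    have hSm : ∀ i, S i ∈ Set.Icc (dlo i) (dhi i) := fun i => hS i (Set.mem_univ i)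
    apply Finset.sum_le_sum
    intro t _
    rw [hlo t, hxhat t]
    exact key_le cI cB _ _ _ hcI hcB hE
      (cum_mono (fun i => (hSm i).1) t) (cum_mono (fun i => (hSm i).2) t)
  · exact Finset.sum_congr rfl fun t _ => (hlo t).trans (hhi t).symm
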